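/- arXiv:2108.03277 — 2 statements merged into one kernel-verified Lean document; each statement's English description precedes it below -/
import Mathlib

section
/- Let {(p_i^k, x_i^k)}_{k=1}^{K_i}, i ∈ N, be a group dataset and x̄ an allocation. If there exists a price q ∈ ℝ^m_+ with q ≠ 0, common to all agents, such that for every i ∈ N the augmented individual dataset {(p_i^k, x_i^k)}_{k=1}^{K_i} ∪ {(q, x̄_i)} is rationalizable, then there exist increasing, concave utilities (u_i)_{i∈N}, each u_i rationalizing agent i's original dataset, for which x̄ is Pareto efficient. -/
open Finset

/-- The dot product of two vectors in `ℝ^m`. -/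
def dot {m : ℕ} (p x : Fin m → ℝ) : ℝ := ∑ j, p j * x j

/-- `x ≪ y`: strictly smaller in every component. -/
def StrLt {m : ℕ} (x y : Fin m → ℝ) : Prop := ∀ j, x j < y j

/-- An increasing utility on the nonnegative orthant. -/
def Incr {m : ℕ} (u : (Fin m → ℝ) → ℝ) : Prop :=
  (∀ x y : Fin m → ℝ, 0 ≤ x → x ≤ y → u x ≤ u y) ∧
  (∀ x y : Fin m → ℝ, 0 ≤ x → StrLt x y → u x < u y)

/-- `u` rationalizes the individual dataset `{(p k, x k)}` : `u` is increasing and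
any bundle strictly better than `x k` is more expensive at prices `p k`. -/
def Rationalizes {m K : ℕ} (p x : Fin K → Fin m → ℝ) (u : (Fin m → ℝ) → ℝ) : Prop :=
  Incr u ∧ ∀ k, ∀ z : Fin m → ℝ, 0 ≤ z → u (x k) < u z → dot (p k) (x k) < dot (p k) z

/-- Direct revealed preference. -/
def RP {m K : ℕ} (p x : Fin K → Fin m → ℝ) (a b : Fin m → ℝ) : Prop :=
  0 ≤ a ∧ 0 ≤ b ∧ (a = b ∨ ∃ k, x k ≤ a ∧ dot (p k) b ≤ dot (p k) (x k))

/-- Direct strict revealed preference. -/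
def SRP {m K : ℕ} (p x : Fin K → Fin m → ℝ) (a b : Fin m → ℝ) : Prop :=
  0 ≤ a ∧ 0 ≤ b ∧
    ((∃ a', StrLt a' a ∧ RP p x a' b) ∨ ∃ k, x k ≤ a ∧ dot (p k) b < dot (p k) (x k))

/-- Indirect revealed preference: the transitive closure of `RP`. -/
def IRP {m K : ℕ} (p x : Fin K → Fin m → ℝ) : (Fin m → ℝ) → (Fin m → ℝ) → Prop :=
  Relation.TransGen (RP p x)

/-- Indirect strict revealed preference: a finite `RP`-chain with at least one strict link. -/
def SIRP {m K : ℕ} (p x : Fin K → Fin m → ℝ) (a b : Fin m → ℝ) : Prop :=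
  ∃ c d, Relation.ReflTransGen (RP p x) a c ∧ SRP p x c d ∧ Relation.ReflTransGen (RP p x) d b

/-- Given a profile of utilities, `yb` Pareto dominates `xb`. -/
def ParetoDom {m : ℕ} {ι : Type} [Fintype ι] (u : ι → (Fin m → ℝ) → ℝ)
    (yb xb : ι → Fin m → ℝ) : Prop :=
  (∀ i, u i (xb i) ≤ u i (yb i)) ∧ ∃ i, u i (xb i) < u i (yb i)

/-- `xb` is Pareto efficient: no allocation of the same aggregate bundle Pareto dominates it. -/
def ParetoEff {m : ℕ} {ι : Type} [Fintype ι] (u : ι → (Fin m → ℝ) → ℝ)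
    (xb : ι → Fin m → ℝ) : Prop :=
  ¬ ∃ yb : ι → Fin m → ℝ, (∀ i, 0 ≤ yb i) ∧ (∑ i, yb i) = (∑ i, xb i) ∧ ParetoDom u yb xb

lemma dot_mono {m : ℕ} {p : Fin m → ℝ} (hp : 0 ≤ p) {x y : Fin m → ℝ} (hxy : x ≤ y) :
    dot p x ≤ dot p y :=
  Finset.sum_le_sum fun j _ => mul_le_mul_of_nonneg_left (hxy j) (hp j)

lemma dot_strict {m : ℕ} {p : Fin m → ℝ} (hp : 0 ≤ p) (hps : 0 < ∑ j, p j)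
    {x y : Fin m → ℝ} (hxy : StrLt x y) : dot p x < dot p y := by
  obtain ⟨j0, hj0⟩ : ∃ j, 0 < p j := by
    by_contra hc
    push_neg at hc
    have : ∑ j, p j ≤ 0 := Finset.sum_nonpos fun j _ => hc j
    linarith
  exact Finset.sum_lt_sum (fun j _ => mul_le_mul_of_nonneg_left (hxy j).le (hp j))
    ⟨j0, Finset.mem_univ _, mul_lt_mul_of_pos_left (hxy j0) hj0⟩

lemma dot_smul_add {m : ℕ} (p x y : Fin m → ℝ) (a b : ℝ) :
    dot p (a • x + b • y) = a * dot p x + b * dot p y := by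
  unfold dot
  rw [Finset.mul_sum, Finset.mul_sum, ← Finset.sum_add_distrib]
  refine Finset.sum_congr rfl fun j _ => ?_
  simp only [Pi.add_apply, Pi.smul_apply, smul_eq_mul]
  ring

lemma dot_sum {m : ℕ} {ι : Type} (s : Finset ι) (q : Fin m → ℝ) (f : ι → Fin m → ℝ) :
    dot q (∑ i ∈ s, f i) = ∑ i ∈ s, dot q (f i) := by
  unfold dot
  simp_rw [Finset.sum_apply, Finset.mul_sum]
  exact Finset.sum_comm

lemma afriat {m n : ℕ} (hn : 0 < n) (P X : Fin n → Fin m → ℝ)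
    (hP : ∀ k, 0 ≤ P k) (hX : ∀ k, 0 ≤ X k)
    (u : (Fin m → ℝ) → ℝ) (hu : Incr u)
    (hr : ∀ k, ∀ z : Fin m → ℝ, 0 ≤ z → u (X k) < u z → dot (P k) (X k) < dot (P k) z) :
    ∃ w : (Fin m → ℝ) → ℝ,
      ConcaveOn ℝ {z : Fin m → ℝ | 0 ≤ z} w ∧ Incr w ∧
      (∀ k, ∀ z : Fin m → ℝ, 0 ≤ z → w (X k) < w z → dot (P k) (X k) < dot (P k) z) ∧
      (∀ k, ∀ z : Fin m → ℝ, w (X k) ≤ w z → dot (P k) (X k) ≤ dot (P k) z) := by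
  haveI : NeZero n := ⟨hn.ne'⟩
  set v : Fin n → ℝ := fun k => u (X k) with hv
  set V : Finset ℝ := Finset.univ.image v with hV
  set t : Fin n → ℕ := fun k => (V.filter (fun a => v k < a)).card with ht
  set d : Fin n → Fin n → ℝ := fun k j => dot (P k) (X j) - dot (P k) (X k) with hd
  -- every price vector has positive total weight
  have hsum : ∀ k, 0 < ∑ j, P k j := by
    intro k
    have h1 : u (X k) < u (X k + 1) :=
      hu.2 _ _ (hX k) (fun j => by simp)
    have h2 : (0 : Fin m → ℝ) ≤ X k + 1 := fun j => by
      have hj : (0:ℝ) ≤ X k j := hX k j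
      simp only [Pi.add_apply, Pi.one_apply, Pi.zero_apply]
      linarith
    have h3 := hr k (X k + 1) h2 h1
    have h4 : dot (P k) (X k + 1) = dot (P k) (X k) + ∑ j, P k j := by
      unfold dot
      rw [← Finset.sum_add_distrib]
      refine Finset.sum_congr rfl fun j _ => ?_
      simp; ring
    linarith [h3, h4.symm.le]
  have factA : ∀ k j, v k < v j → 0 < d k j := by
    intro k j hlt
    have := hr k (X j) (hX j) hlt
    simp only [hd]; linarith
  have factB : ∀ k j, d k j < 0 → v j < v k := by
    intro k j hdlt
    set ε : ℝ := (-(d k j)) / (2 * ∑ l, P k l) with hε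
    have hεpos : 0 < ε := div_pos (by linarith) (by linarith [hsum k])
    set z : Fin m → ℝ := fun l => X j l + ε with hz
    have hz0 : (0:Fin m → ℝ) ≤ z := fun l => by
      have hl : (0:ℝ) ≤ X j l := hX j l
      simp only [hz, Pi.zero_apply]
      linarith
    have hlt : u (X j) < u z := hu.2 _ _ (hX j) (fun l => by simp [hz]; linarith)
    have hdot : dot (P k) z = dot (P k) (X j) + ε * ∑ l, P k l := by
      unfold dot
      rw [Finset.mul_sum, ← Finset.sum_add_distrib]
      refine Finset.sum_congr rfl fun l _ => ?_
      simp [hz]; ring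
    have hεS : ε * ∑ l, P k l = (-(d k j)) / 2 := by
      rw [hε]
      have hS : (∑ l, P k l) ≠ 0 := (hsum k).ne'
      field_simp
    have hzk : dot (P k) z < dot (P k) (X k) := by
      rw [hdot, hεS]
      have : dot (P k) (X j) = dot (P k) (X k) + d k j := by simp [hd]
      rw [this]; linarith
    have hnot : ¬ (u (X k) < u z) := fun hlt' => absurd (hr k z hz0 hlt') (by linarith)
    exact lt_of_lt_of_le hlt (not_lt.mp hnot)
  have teq : ∀ j k, v j = v k → t j = t k := by
    intro j k hjk; simp only [ht, hjk]
  have tlt : ∀ j k, v j < v k → t k < t j := by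
    intro j k hjk
    apply Finset.card_lt_card
    have hsub : V.filter (fun a => v k < a) ⊆ V.filter (fun a => v j < a) := by
      intro a ha
      rw [Finset.mem_filter] at ha ⊢
      exact ⟨ha.1, lt_trans hjk ha.2⟩
    rw [Finset.ssubset_iff_of_subset hsub]
    refine ⟨v k, ?_, ?_⟩
    · rw [Finset.mem_filter]
      exact ⟨Finset.mem_image_of_mem v (Finset.mem_univ k), hjk⟩
    · rw [Finset.mem_filter]
      push_neg
      intro _
      exact le_refl _
  have hne : (Finset.univ : Finset (Fin n × Fin n)).Nonempty := Finset.univ_nonempty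
  have hne1 : (Finset.univ : Finset (Fin n)).Nonempty := Finset.univ_nonempty
  set δ : ℝ := Finset.univ.inf' hne
      (fun kj : Fin n × Fin n => if 0 < d kj.1 kj.2 then d kj.1 kj.2 else 1) with hδ
  have hδpos : 0 < δ := by
    rw [hδ, Finset.lt_inf'_iff]
    intro kj _
    by_cases hc : 0 < d kj.1 kj.2 <;> simp [hc]
  have hδle : ∀ k j, 0 < d k j → δ ≤ d k j := by
    intro k j hdkj
    have := Finset.inf'_le (s := (Finset.univ : Finset (Fin n × Fin n)))
      (fun kj : Fin n × Fin n => if 0 < d kj.1 kj.2 then d kj.1 kj.2 else 1)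
      (Finset.mem_univ (k, j))
    rw [hδ]
    exact this.trans (by simp [hdkj])
  set D : ℝ := 1 + Finset.univ.sup' hne (fun kj : Fin n × Fin n => |d kj.1 kj.2|) with hD
  have hDd : ∀ k j, -(d k j) ≤ D := by
    intro k j
    have h1 : |d k j| ≤ Finset.univ.sup' hne (fun kj : Fin n × Fin n => |d kj.1 kj.2|) :=
      Finset.le_sup' (fun kj : Fin n × Fin n => |d kj.1 kj.2|) (Finset.mem_univ (k, j))
    have := neg_abs_le (d k j)
    rw [hD]; linarith
  set M : ℝ := max 2 (1 + D / δ) with hM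
  have hM2 : (2:ℝ) ≤ M := le_max_left _ _
  have hM1 : (1:ℝ) ≤ M := by linarith
  have hMDδ : D / δ ≤ M - 1 := by
    have := le_max_right 2 (1 + D / δ)
    rw [hM]; linarith
  set U : Fin n → ℝ := fun k => -(M ^ (t k + 1)) with hU
  set lam : Fin n → ℝ := fun k => M ^ (t k + 1) / δ with hlamdef
  have hMpow : ∀ s : ℕ, (0:ℝ) < M ^ s := fun s => pow_pos (by linarith) s
  have hlam : ∀ k, 0 < lam k := fun k => div_pos (hMpow _) hδpos
  have hUneg : ∀ k, U k < 0 := fun k => by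
    simp only [hU, neg_lt, neg_zero]; exact hMpow _
  -- Afriat inequalities
  have hAf : ∀ j k, U j ≤ U k + lam k * d k j := by
    intro j k
    rcases lt_trichotomy (v j) (v k) with hc | hc | hc
    · have htk : t k + 1 ≤ t j := tlt j k hc
      by_cases hdkj : 0 ≤ d k j
      · have h1 : U j ≤ U k := by
          simp only [hU, neg_le_neg_iff]
          exact pow_le_pow_right₀ hM1 (by omega)
        have h2 : 0 ≤ lam k * d k j := mul_nonneg (hlam k).le hdkj
        linarith
      · push_neg at hdkj
        have h1 : lam k * (-(d k j)) ≤ M ^ (t k + 1) / δ * D :=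
          mul_le_mul_of_nonneg_left (hDd k j) (hlam k).le
        have h2 : M ^ (t k + 1) / δ * D = M ^ (t k + 1) * (D / δ) := by ring
        have h3 : M ^ (t k + 1) * (D / δ) ≤ M ^ (t k + 1) * (M - 1) :=
          mul_le_mul_of_nonneg_left hMDδ (hMpow _).le
        have h4 : M ^ (t k + 1) * (M - 1) = M ^ (t k + 2) - M ^ (t k + 1) := by
          rw [pow_succ]; ring
        have h5 : M ^ (t k + 2) ≤ M ^ (t j + 1) := pow_le_pow_right₀ hM1 (by omega)
        have h7 : lam k * (-(d k j)) ≤ M ^ (t j + 1) - M ^ (t k + 1) := by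
          calc lam k * (-(d k j)) ≤ M ^ (t k + 1) / δ * D := h1
            _ = M ^ (t k + 1) * (D / δ) := h2
            _ ≤ M ^ (t k + 1) * (M - 1) := h3
            _ = M ^ (t k + 2) - M ^ (t k + 1) := h4
            _ ≤ M ^ (t j + 1) - M ^ (t k + 1) := by linarith
        have h8 : U j = -(M ^ (t j + 1)) := rfl
        have h9 : U k = -(M ^ (t k + 1)) := rfl
        nlinarith [h7, h8, h9]
    · have hdkj : 0 ≤ d k j := by
        by_contra hcc
        push_neg at hcc
        exact absurd (factB k j hcc) (by rw [hc]; exact lt_irrefl _)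
      have h1 : U j = U k := by simp only [hU, teq j k hc]
      have h2 : 0 ≤ lam k * d k j := mul_nonneg (hlam k).le hdkj
      linarith
    · have hdkj := factA k j hc
      have hδd := hδle k j hdkj
      have h1 : lam k * δ = M ^ (t k + 1) := div_mul_cancel₀ _ hδpos.ne'
      have h2 : lam k * δ ≤ lam k * d k j := mul_le_mul_of_nonneg_left hδd (hlam k).le
      have h3 : U j ≤ 0 := (hUneg j).le
      have h4 : U k = -(M ^ (t k + 1)) := rfl
      linarith
  set w : (Fin m → ℝ) → ℝ :=
    fun z => Finset.univ.inf' hne1 (fun k => U k + lam k * (dot (P k) z - dot (P k) (X k))) with hw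
  have hwle : ∀ k z, w z ≤ U k + lam k * (dot (P k) z - dot (P k) (X k)) := fun k z =>
    Finset.inf'_le _ (Finset.mem_univ k)
  have hwX : ∀ j, w (X j) = U j := by
    intro j
    apply le_antisymm
    · have := hwle j (X j); simpa using this
    · apply Finset.le_inf'
      intro k _
      have := hAf j k
      simp only [hd] at this
      linarith
  have hIncr : Incr w := by
    constructor
    · intro z z' _ hle
      apply Finset.le_inf'
      intro k _
      have h1 := hwle k z
      have h2 : dot (P k) z ≤ dot (P k) z' := dot_mono (hP k) hle
      nlinarith [hlam k]
    · intro z z' hz0 hstr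
      obtain ⟨k0, _, hk0⟩ := Finset.exists_mem_eq_inf' hne1
        (fun k => U k + lam k * (dot (P k) z' - dot (P k) (X k)))
      have h1 := hwle k0 z
      have h2 : dot (P k0) z < dot (P k0) z' := dot_strict (hP k0) (hsum k0) hstr
      have h3 : w z' = U k0 + lam k0 * (dot (P k0) z' - dot (P k0) (X k0)) := hk0
      nlinarith [hlam k0]
  refine ⟨w, ?_, hIncr, ?_, ?_⟩
  · constructor
    · intro a ha b hb s r hs hr' hsr
      intro j
      have ha' : (0:ℝ) ≤ a j := ha j
      have hb' : (0:ℝ) ≤ b j := hb j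
      simp only [Pi.add_apply, Pi.smul_apply, smul_eq_mul, Pi.zero_apply]
      nlinarith
    · intro a ha b hb s r hs hr' hsr
      simp only [smul_eq_mul]
      apply Finset.le_inf'
      intro k _
      have h1 := hwle k a
      have h2 := hwle k b
      have h3 : dot (P k) (s • a + r • b) = s * dot (P k) a + r * dot (P k) b :=
        dot_smul_add _ _ _ _ _
      have hr1 : r = 1 - s := by linarith
      have key : s * (U k + lam k * (dot (P k) a - dot (P k) (X k)))
          + r * (U k + lam k * (dot (P k) b - dot (P k) (X k)))
          = U k + lam k * (dot (P k) (s • a + r • b) - dot (P k) (X k)) := by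
        rw [h3, hr1]; ring
      nlinarith [mul_le_mul_of_nonneg_left h1 hs, mul_le_mul_of_nonneg_left h2 hr']
  · intro k z _ hlt
    rw [hwX k] at hlt
    have h1 := hwle k z
    have hc : 0 < dot (P k) z - dot (P k) (X k) := by
      by_contra hcc
      push_neg at hcc
      have : lam k * (dot (P k) z - dot (P k) (X k)) ≤ 0 :=
        mul_nonpos_of_nonneg_of_nonpos (hlam k).le hcc
      linarith
    linarith
  · intro k z hle
    rw [hwX k] at hle
    have h1 := hwle k z
    have hc : 0 ≤ dot (P k) z - dot (P k) (X k) := by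
      by_contra hcc
      push_neg at hcc
      have : lam k * (dot (P k) z - dot (P k) (X k)) < 0 :=
        mul_neg_of_pos_of_neg (hlam k) hcc
      linarith
    linarith

/-- If there is a nonzero price `q ∈ ℝ^m_+`, common to all agents, such
that each augmented individual dataset `D_i ∪ {(q, xb i)}` is rationalizable, then there
are increasing, concave utilities rationalizing the original datasets for which the
allocation `xb` is Pareto efficient. -/
theorem stmt6 {m : ℕ} (hm : 0 < m) {ι : Type} [Fintype ι]
    (K : ι → ℕ) (p x : ∀ i, Fin (K i) → Fin m → ℝ)
    (hp : ∀ i k, 0 ≤ p i k) (hx : ∀ i k, 0 ≤ x i k)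
    (xb : ι → Fin m → ℝ) (hxb : ∀ i, 0 ≤ xb i)
    (h : ∃ q : Fin m → ℝ, 0 ≤ q ∧ q ≠ 0 ∧
      ∀ i, ∃ u : (Fin m → ℝ) → ℝ, Rationalizes (p i) (x i) u ∧
        ∀ z : Fin m → ℝ, 0 ≤ z → u (xb i) < u z → dot q (xb i) < dot q z) :
    ∃ u : ι → (Fin m → ℝ) → ℝ,
      (∀ i, ConcaveOn ℝ {z : Fin m → ℝ | 0 ≤ z} (u i) ∧ Rationalizes (p i) (x i) (u i)) ∧
      ParetoEff u xb := by
  obtain ⟨q, hq0, hqne, hq⟩ := h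
  choose u0 hu0 hq0' using hq
  set Pa : ∀ i, Fin (K i + 1) → Fin m → ℝ := fun i => Fin.snoc (p i) q with hPa
  set Xa : ∀ i, Fin (K i + 1) → Fin m → ℝ := fun i => Fin.snoc (x i) (xb i) with hXa
  have hPa0 : ∀ i k, 0 ≤ Pa i k := by
    intro i k
    refine Fin.lastCases ?_ ?_ k
    · simp [hPa, Fin.snoc_last]; exact hq0
    · intro k'; simp [hPa, Fin.snoc_castSucc]; exact hp i k'
  have hXa0 : ∀ i k, 0 ≤ Xa i k := by
    intro i k
    refine Fin.lastCases ?_ ?_ k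
    · simp [hXa, Fin.snoc_last]; exact hxb i
    · intro k'; simp [hXa, Fin.snoc_castSucc]; exact hx i k'
  have hra : ∀ i k, ∀ z : Fin m → ℝ, 0 ≤ z → u0 i (Xa i k) < u0 i z →
      dot (Pa i k) (Xa i k) < dot (Pa i k) z := by
    intro i k
    refine Fin.lastCases ?_ ?_ k
    · simp only [hPa, hXa, Fin.snoc_last]
      exact hq0' i
    · intro k'
      simp only [hPa, hXa, Fin.snoc_castSucc]
      exact (hu0 i).2 k'
  have key : ∀ i, ∃ w : (Fin m → ℝ) → ℝ,
      ConcaveOn ℝ {z : Fin m → ℝ | 0 ≤ z} w ∧ Incr w ∧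
      (∀ k, ∀ z : Fin m → ℝ, 0 ≤ z → w (Xa i k) < w z →
        dot (Pa i k) (Xa i k) < dot (Pa i k) z) ∧
      (∀ k, ∀ z : Fin m → ℝ, w (Xa i k) ≤ w z → dot (Pa i k) (Xa i k) ≤ dot (Pa i k) z) :=
    fun i => afriat (Nat.succ_pos _) (Pa i) (Xa i) (hPa0 i) (hXa0 i) (u0 i) (hu0 i).1 (hra i)
  choose w hw1 hw2 hw3 hw4 using key
  refine ⟨w, fun i => ⟨hw1 i, hw2 i, fun k z hz hlt => ?_⟩, ?_⟩
  · have := hw3 i (Fin.castSucc k) z hz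
    simp only [hPa, hXa, Fin.snoc_castSucc] at this
    exact this hlt
  · rintro ⟨yb, hyb0, hsumeq, hdom, i0, hi0⟩
    have hweak : ∀ i, dot q (xb i) ≤ dot q (yb i) := by
      intro i
      have := hw4 i (Fin.last _) (yb i)
      simp only [hPa, hXa, Fin.snoc_last] at this
      exact this (hdom i)
    have hstrict : dot q (xb i0) < dot q (yb i0) := by
      have := hw3 i0 (Fin.last _) (yb i0) (hyb0 i0)
      simp only [hPa, hXa, Fin.snoc_last] at this
      exact this hi0
    have hlt : ∑ i, dot q (xb i) < ∑ i, dot q (yb i) :=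
      Finset.sum_lt_sum (fun i _ => hweak i) ⟨i0, Finset.mem_univ _, hstrict⟩
    have h1 : dot q (∑ i, xb i) = ∑ i, dot q (xb i) := dot_sum _ _ _
    have h2 : dot q (∑ i, yb i) = ∑ i, dot q (yb i) := dot_sum _ _ _
    rw [hsumeq] at h2
    linarith
end

section
/- Let D = {(p^k, x^k)}_{k=1}^K and D' = {(p^k, y^k)}_{k=1}^K be individual datasets with the same strictly positive prices p^k ∈ ℝ^m_{++} in each observation, each rationalizable, and suppose x^l < y^k (componentwise ≤ and ≠) for all k, l ∈ {1,…,K}. Then the combined dataset D ∪ D' is rationalizable. -/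
open Finset

private lemma dot_mono' {m : ℕ} {p z z' : Fin m → ℝ} (hp : ∀ j, 0 ≤ p j) (h : z ≤ z') :
    dot p z ≤ dot p z' :=
  Finset.sum_le_sum fun j _ => mul_le_mul_of_nonneg_left (h j) (hp j)

private lemma dot_strict' {m : ℕ} {p a b : Fin m → ℝ} (hp : StrLt 0 p) (hab : a ≤ b)
    (hne : a ≠ b) : dot p a < dot p b := by
  obtain ⟨j, hj⟩ := Function.ne_iff.mp hne
  have hpj : ∀ i, 0 < p i := fun i => by simpa using hp i
  exact Finset.sum_lt_sum
    (fun i _ => mul_le_mul_of_nonneg_left (hab i) (hpj i).le)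
    ⟨j, mem_univ j, mul_lt_mul_of_pos_left (lt_of_le_of_ne (hab j) hj) (hpj j)⟩

/-- If two individual datasets share the same strictly positive prices,
each is rationalizable, and every bundle of the first is componentwise below (and not equal
to) every bundle of the second, then their union is rationalizable (by a single increasing
utility). -/
theorem stmt12 {m K : ℕ} (hm : 0 < m)
    (p : Fin K → Fin m → ℝ) (hp : ∀ k, StrLt 0 (p k))
    (x y : Fin K → Fin m → ℝ) (hx : ∀ k, 0 ≤ x k) (hy : ∀ k, 0 ≤ y k)
    (hDx : ∃ u : (Fin m → ℝ) → ℝ, Rationalizes p x u)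
    (hDy : ∃ u : (Fin m → ℝ) → ℝ, Rationalizes p y u)
    (hlt : ∀ k l, x l ≤ y k ∧ x l ≠ y k) :
    ∃ u : (Fin m → ℝ) → ℝ, Rationalizes p x u ∧ Rationalizes p y u := by
  obtain ⟨ux, hxI, uxr⟩ := hDx
  obtain ⟨uy, hyI, uyr⟩ := hDy
  rcases Nat.eq_zero_or_pos K with hK | hK
  · subst hK
    exact ⟨ux, ⟨hxI, fun k => k.elim0⟩, ⟨hxI, fun k => k.elim0⟩⟩
  · have hne : (univ : Finset (Fin K)).Nonempty := ⟨⟨0, hK⟩, mem_univ _⟩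
    obtain ⟨uxm, uxs⟩ := hxI
    obtain ⟨uym, uys⟩ := hyI
    have hpnn : ∀ k j, 0 ≤ p k j := fun k j => le_of_lt (by simpa using hp k j)
    -- contrapositive forms of rationalization
    have uxc : ∀ k (z : Fin m → ℝ), 0 ≤ z → dot (p k) z ≤ dot (p k) (x k) → ux z ≤ ux (x k) :=
      fun k z hz hd => le_of_not_gt fun h => absurd (uxr k z hz h) (not_lt.mpr hd)
    have uyc : ∀ k (z : Fin m → ℝ), 0 ≤ z → dot (p k) z ≤ dot (p k) (y k) → uy z ≤ uy (y k) :=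
      fun k z hz hd => le_of_not_gt fun h => absurd (uyr k z hz h) (not_lt.mpr hd)
    -- penalty term
    set w : (Fin m → ℝ) → ℝ :=
      fun z => max (univ.inf' hne fun i => dot (p i) z - dot (p i) (x i)) 0 with hw
    have hw0 : ∀ k (z : Fin m → ℝ), dot (p k) z ≤ dot (p k) (x k) → w z = 0 := by
      intro k z hd
      apply max_eq_right
      have h1 := Finset.inf'_le (fun i => dot (p i) z - dot (p i) (x i)) (mem_univ k)
      linarith
    have hwx : ∀ k, w (x k) = 0 := fun k => hw0 k (x k) le_rfl
    have hwm : ∀ z z' : Fin m → ℝ, z ≤ z' → w z ≤ w z' := by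
      intro z z' h
      apply max_le_max _ le_rfl
      apply Finset.le_inf'
      intro i _
      have h1 := Finset.inf'_le (fun i => dot (p i) z - dot (p i) (x i)) (mem_univ i)
      have h2 : dot (p i) z ≤ dot (p i) z' := dot_mono' (hpnn i) h
      linarith
    have key : ∀ i k, dot (p i) (x i) < dot (p i) (y k) :=
      fun i k => dot_strict' (hp i) (hlt k i).1 (hlt k i).2
    have hwy : ∀ k, 0 < w (y k) := by
      intro k
      have h1 : 0 < univ.inf' hne fun i => dot (p i) (y k) - dot (p i) (x i) := by
        rw [Finset.lt_inf'_iff]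
        intro i _
        have := key i k
        linarith
      exact lt_of_lt_of_le h1 (le_max_left _ _)
    set A := univ.sup' hne fun l => ux (x l) with hA
    set B := univ.inf' hne fun k => ux (y k) + w (y k) with hB
    have hAB : A < B := by
      obtain ⟨l1, _, hl1⟩ := Finset.exists_mem_eq_sup' hne fun l => ux (x l)
      obtain ⟨k1, _, hk1⟩ := Finset.exists_mem_eq_inf' hne fun k => ux (y k) + w (y k)
      rw [hA, hB, hl1, hk1]
      have h1 : ux (x l1) ≤ ux (y k1) := uxm _ _ (hx l1) (hlt k1 l1).1
      have h2 := hwy k1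
      linarith
    set S := univ.inf' hne fun l => uy (x l) with hS
    set T := univ.sup' hne fun k => uy (y k) with hT
    have hst : ∀ l k, uy (x l) ≤ uy (y k) := fun l k => uym _ _ (hx l) (hlt k l).1
    have hD : 0 ≤ T - S := by
      have h1 := Finset.inf'_le (fun l => uy (x l)) (mem_univ (⟨0, hK⟩ : Fin K))
      have h2 := Finset.le_sup' (fun k => uy (y k)) (mem_univ (⟨0, hK⟩ : Fin K))
      have h3 := hst ⟨0, hK⟩ ⟨0, hK⟩
      rw [hS, hT]
      linarith
    set ε := (B - A) / (T - S + 1) with hε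
    have hεpos : 0 < ε := div_pos (by linarith) (by linarith)
    have hkey : ∀ l k, ε * (uy (y k) - uy (x l)) ≤ (ux (y k) + w (y k)) - ux (x l) := by
      intro l k
      have h1 : uy (y k) - uy (x l) ≤ T - S := by
        have ha := Finset.le_sup' (fun k => uy (y k)) (mem_univ k)
        have hb := Finset.inf'_le (fun l => uy (x l)) (mem_univ l)
        rw [hS, hT]
        linarith
      have h2 : ε * (uy (y k) - uy (x l)) ≤ ε * (T - S) :=
        mul_le_mul_of_nonneg_left h1 hεpos.le
      have h3 : ε * (T - S) ≤ B - A := by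
        rw [hε, div_mul_eq_mul_div, div_le_iff₀ (by linarith : (0:ℝ) < T - S + 1)]
        nlinarith
      have h4 : ux (x l) ≤ A := by
        have := Finset.le_sup' (fun l => ux (x l)) (mem_univ l); rw [hA]; exact this
      have h5 : B ≤ ux (y k) + w (y k) := by
        have := Finset.inf'_le (fun k => ux (y k) + w (y k)) (mem_univ k); rw [hB]; exact this
      linarith
    set c := univ.inf' hne fun k => (ux (y k) + w (y k)) - ε * uy (y k) with hc
    have hcy : ∀ k, c + ε * uy (y k) ≤ ux (y k) + w (y k) := by
      intro k
      have := Finset.inf'_le (fun k => (ux (y k) + w (y k)) - ε * uy (y k)) (mem_univ k)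
      rw [hc]
      linarith
    have hcx : ∀ l, ux (x l) ≤ c + ε * uy (x l) := by
      intro l
      obtain ⟨k0, _, hk0⟩ :=
        Finset.exists_mem_eq_inf' hne fun k => (ux (y k) + w (y k)) - ε * uy (y k)
      have h1 := hkey l k0
      rw [hc, hk0]
      linarith
    set u : (Fin m → ℝ) → ℝ := fun z => min (ux z + w z) (c + ε * uy z) with hu
    have huI : Incr u := by
      constructor
      · intro z z' hz h
        apply min_le_min
        · have h1 := uxm z z' hz h
          have h2 := hwm z z' h
          linarith
        · have h1 := uym z z' hz h
          nlinarith
      · intro z z' hz h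
        have hle : z ≤ z' := fun j => (h j).le
        apply lt_min
        · refine lt_of_le_of_lt (min_le_left _ _) ?_
          have h1 := uxs z z' hz h
          have h2 := hwm z z' hle
          linarith
        · refine lt_of_le_of_lt (min_le_right _ _) ?_
          have h1 := uys z z' hz h
          nlinarith
    refine ⟨u, ⟨huI, ?_⟩, ⟨huI, ?_⟩⟩
    · intro k z hz hltu
      by_contra hcon
      push_neg at hcon
      have h1 : ux z ≤ ux (x k) := uxc k z hz hcon
      have h2 : w z = 0 := hw0 k z hcon
      have hux : u (x k) = ux (x k) := by
        show (ux (x k) + w (x k)) ⊓ (c + ε * uy (x k)) = ux (x k)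
        rw [hwx k, add_zero]
        exact min_eq_left (hcx k)
      have h3 : u z ≤ ux (x k) := by
        refine le_trans (min_le_left _ _) ?_
        rw [h2]
        linarith
      rw [hux] at hltu
      linarith
    · intro k z hz hltu
      by_contra hcon
      push_neg at hcon
      have h1 : uy z ≤ uy (y k) := uyc k z hz hcon
      have huy : u (y k) = c + ε * uy (y k) := min_eq_right (hcy k)
      have h3 : u z ≤ c + ε * uy (y k) := by
        refine le_trans (min_le_right _ _) ?_
        nlinarith
      rw [huy] at hltu
      linarith
end
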